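/- Let G be a graph, H0 an r-partite r-uniform hypergraph, and ed0 : V(G) → E(H0) a surjective map such that ed0(u) ∩ ed0(v) ≠ ∅ whenever uv ∈ E(G). Then there exists an r-edge-colouring of G such that every cover of V(G) by monochromatic connected components uses at least τ(H0) components; in particular tc_r(G) ≥ τ(H0). -/

import Mathlib

/-- The colour-`i` subgraph of `G` under the edge-colouring `c`. -/
def colourSub {V : Type*} {r : ℕ} (G : SimpleGraph V) (c : Sym2 V → Fin r)
    (i : Fin r) : SimpleGraph V where
  Adj u v := G.Adj u v ∧ c s(u, v) = i
  symm := by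
    constructor
    intro u v h
    exact ⟨h.1.symm, by rw [Sym2.eq_swap]; exact h.2⟩
  loopless := by constructor; intro u h; exact G.irrefl h.1

/-- Given a graph `G`, an r-partite r-uniform hypergraph `H0` (with parts
`Vp i` and edge set `E0` of functions picking one vertex per part), and a
surjective map `ed0 : V(G) → E(H0)` with `ed0(u) ∩ ed0(v) ≠ ∅` whenever
`uv ∈ E(G)`, there is an r-edge-colouring `c` of `G` such that every cover of
`V(G)` by monochromatic connected components uses at least `τ(H0)` components:
for any such cover `S` there is a vertex cover of `H0` of size at most `|S|`. -/
theorem stmt_17 {V : Type*} {r : ℕ} (hr : 1 ≤ r) (G : SimpleGraph V)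
    {Vp : Fin r → Type*} (E0 : Set ((i : Fin r) → Vp i))
    (ed0 : V → ((i : Fin r) → Vp i))
    (hmem : ∀ u, ed0 u ∈ E0)
    (hsurj : ∀ f ∈ E0, ∃ u, ed0 u = f)
    (hadj : ∀ u v, G.Adj u v → ∃ i, ed0 u i = ed0 v i) :
    ∃ c : Sym2 V → Fin r,
      ∀ S : Finset ((i : Fin r) × (colourSub G c i).ConnectedComponent),
        (∀ v : V, ∃ p ∈ S, (colourSub G c p.1).connectedComponentMk v = p.2) →
        ∃ Y : Finset ((i : Fin r) × Vp i), Y.card ≤ S.card ∧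
          ∀ f ∈ E0, ∃ p ∈ Y, f p.1 = p.2 := by
  classical
  -- colouring: colour an edge by an index where the two hyperedges agree
  set P : Sym2 V → Fin r → Prop :=
    fun q i => ∃ u v, q = s(u, v) ∧ ed0 u i = ed0 v i with hP
  set c : Sym2 V → Fin r :=
    fun q => if h : ∃ i, P q i then h.choose else ⟨0, hr⟩ with hc
  have key : ∀ u v i, (colourSub G c i).Adj u v → ed0 u i = ed0 v i := by
    intro u v i ⟨hGadj, hcol⟩
    have hex : ∃ j, P s(u, v) j := by
      obtain ⟨j, hj⟩ := hadj u v hGadj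
      exact ⟨j, u, v, rfl, hj⟩
    have : c s(u, v) = hex.choose := by simp [hc, hex]
    have hspec : P s(u, v) hex.choose := hex.choose_spec
    rw [this] at hcol
    obtain ⟨u', v', hq, heq⟩ := hspec
    rw [Sym2.eq_iff] at hq
    subst hcol
    rcases hq with ⟨rfl, rfl⟩ | ⟨rfl, rfl⟩
    · exact heq
    · exact heq.symm
  refine ⟨c, fun S hcov => ?_⟩
  -- ed0 · i is constant on colour-i components
  have wconst : ∀ (i : Fin r) {u v : V}, (colourSub G c i).Walk u v → ed0 u i = ed0 v i := by
    intro i u v w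
    induction w with
    | nil => rfl
    | cons ha _ ih => exact (key _ _ i ha).trans ih
  choose pick hpickS hpick using hcov
  refine ⟨S.image (fun p => (⟨p.1, p.2.lift (fun v => ed0 v p.1)
      (fun v w pw _ => wconst p.1 pw)⟩ : (i : Fin r) × Vp i)),
    Finset.card_image_le, ?_⟩
  intro f hf
  obtain ⟨u, rfl⟩ := hsurj f hf
  refine ⟨_, Finset.mem_image_of_mem _ (hpickS u), ?_⟩
  rw [← hpick u]
  rfl
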